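/- Let (M^{2n+1}, φ, ξ, η, g) be a CR-integrable almost α-Kenmotsu manifold with canonical connection ∇̃ and torsion T̃. Then the following conditions are equivalent: (a) ∇̃T̃ = 0; (b) ∇̃h' = 0; (c) the tensor field h' is η-parallel and ∇_ξ h' = 0. -/

import Mathlib

/- Common framework: a (2n+1)-dimensional manifold is modelled by an open subset `s`
of Euclidean space; tensor fields are given pointwise (evaluated on constant vector
fields), connections are given by their Christoffel symbols, and covariant
derivatives / curvatures are expressed via `fderiv`. -/

noncomputable section

namespace AKG

open scoped RealInnerProductSpace

abbrev E (m : ℕ) : Type := EuclideanSpace ℝ (Fin m)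

variable {V : Type*} [NormedAddCommGroup V] [NormedSpace ℝ V]

/-- A Riemannian metric on `s`, as a pointwise symmetric positive bilinear form. -/
def IsMetricOn (s : Set V) (g : V → V → V → ℝ) : Prop :=
  (∀ u v : V, ContDiffOn ℝ (⊤ : ℕ∞) (fun p => g p u v) s) ∧
  (∀ p ∈ s, ∀ u v : V, g p u v = g p v u) ∧
  (∀ p ∈ s, ∀ v : V, IsLinearMap ℝ (fun u : V => g p u v)) ∧
  (∀ p ∈ s, ∀ u : V, u ≠ 0 → 0 < g p u u)

/-- A linear connection on `s`, via its Christoffel symbols. -/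
def IsConnectionOn (s : Set V) (Γ : V → V → V → V) : Prop :=
  (∀ u v : V, ContDiffOn ℝ (⊤ : ℕ∞) (fun p => Γ p u v) s) ∧
  (∀ p ∈ s, ∀ v : V, IsLinearMap ℝ (fun u : V => Γ p u v)) ∧
  (∀ p ∈ s, ∀ u : V, IsLinearMap ℝ (fun v : V => Γ p u v))

/-- The Levi-Civita connection of `g` on `s`: torsion-free and metric. -/
def IsLeviCivitaOn (s : Set V) (g : V → V → V → ℝ) (Γ : V → V → V → V) : Prop :=
  IsConnectionOn s Γ ∧
  (∀ p ∈ s, ∀ u v : V, Γ p u v = Γ p v u) ∧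
  (∀ p ∈ s, ∀ u v w : V,
    fderiv ℝ (fun q => g q v w) p u = g p (Γ p u v) w + g p v (Γ p u w))

/-- Covariant derivative `∇ᵤ X` of a vector field `X` at `p`. -/
def cov (Γ : V → V → V → V) (X : V → V) (p u : V) : V :=
  fderiv ℝ X p u + Γ p u (X p)

/-- Curvature tensor `R(u,v)w` at `p` (evaluated on constant extensions). -/
def Rm (Γ : V → V → V → V) (p u v w : V) : V :=
  fderiv ℝ (fun q => Γ q v w) p u - fderiv ℝ (fun q => Γ q u w) p v
    + Γ p u (Γ p v w) - Γ p v (Γ p u w)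

/-- Covariant derivative `(∇ᵤ A)(v)` of a (1,1)-tensor field `A`. -/
def covOp (Γ : V → V → V → V) (A : V → V → V) (p u v : V) : V :=
  fderiv ℝ (fun q => A q v) p u + Γ p u (A p v) - A p (Γ p u v)

/-- Covariant derivative of a (1,2)-tensor field. -/
def covT2 (Γ : V → V → V → V) (A : V → V → V → V) (p x u v : V) : V :=
  fderiv ℝ (fun q => A q u v) p x + Γ p x (A p u v)
    - A p (Γ p x u) v - A p u (Γ p x v)

/-- Covariant derivative of a (1,3)-tensor field. -/
def covT3 (Γ : V → V → V → V) (B : V → V → V → V → V) (p x u v w : V) : V :=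
  fderiv ℝ (fun q => B q u v w) p x + Γ p x (B p u v w)
    - B p (Γ p x u) v w - B p u (Γ p x v) w - B p u v (Γ p x w)

/-- Local symmetry: `∇R = 0`. -/
def LocallySymmetricOn (s : Set V) (Γ : V → V → V → V) : Prop :=
  ∀ p ∈ s, ∀ x u v w : V, covT3 Γ (Rm Γ) p x u v w = 0

/-- Constant sectional curvature `k`. -/
def ConstCurvOn (s : Set V) (g : V → V → V → ℝ) (Γ : V → V → V → V) (k : ℝ) : Prop :=
  ∀ p ∈ s, ∀ u v w : V, Rm Γ p u v w = k • (g p v w • u - g p u w • v)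

def HasConstCurv (s : Set V) (g : V → V → V → ℝ) (k : ℝ) : Prop :=
  ∃ Γ : V → V → V → V, IsLeviCivitaOn s g Γ ∧ ConstCurvOn s g Γ k

/-- Torsion of a connection (with the factor 1/2 normalization of the paper). -/
def torsion (Γ : V → V → V → V) (p u v : V) : V := (2 : ℝ)⁻¹ • (Γ p u v - Γ p v u)

/-- An almost contact metric structure on `s`. -/
structure ACM (s : Set V) where
  phi : V → V → V
  xi : V → V
  eta : V → V → ℝ
  g : V → V → V → ℝ
  smooth_phi : ∀ u : V, ContDiffOn ℝ (⊤ : ℕ∞) (fun p => phi p u) s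
  smooth_xi : ContDiffOn ℝ (⊤ : ℕ∞) xi s
  smooth_eta : ∀ u : V, ContDiffOn ℝ (⊤ : ℕ∞) (fun p => eta p u) s
  lin_phi : ∀ p ∈ s, IsLinearMap ℝ (phi p)
  lin_eta : ∀ p ∈ s, IsLinearMap ℝ (eta p)
  metric : IsMetricOn s g
  phi_sq : ∀ p ∈ s, ∀ u : V, phi p (phi p u) = -u + eta p u • xi p
  eta_xi : ∀ p ∈ s, eta p (xi p) = 1
  compat : ∀ p ∈ s, ∀ u v : V, g p (phi p u) (phi p v) = g p u v - eta p u * eta p v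

/-- Fundamental 2-form `Φ(u,v) = g(u, φ v)`. -/
def FPhi {s : Set V} (S : ACM s) (p u v : V) : ℝ := S.g p u (S.phi p v)

/-- Lie derivative `(L_ξ φ)(u)` at `p` (constant extension of `u`). -/
def lieXiPhi (phi : V → V → V) (xi : V → V) (p u : V) : V :=
  fderiv ℝ (fun q => phi q u) p (xi p) - fderiv ℝ xi p (phi p u)
    + phi p (fderiv ℝ xi p u)

/-- The operator `h' = (1/(2α)) (L_ξ φ) ∘ φ`. -/
def hpr (α : ℝ) (phi : V → V → V) (xi : V → V) (p u : V) : V :=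
  (1 / (2 * α)) • lieXiPhi phi xi p (phi p u)

/-- `dη(u,v)` (constant extensions). -/
def dEta (eta : V → V → ℝ) (p u v : V) : ℝ :=
  fderiv ℝ (fun q => eta q v) p u - fderiv ℝ (fun q => eta q u) p v

/-- `S` is an almost α-Kenmotsu structure on `s` : `dη = 0` and `dΦ = 2α η ∧ Φ`. -/
structure IsAK (s : Set V) (S : ACM s) (α : ℝ) : Prop where
  pos : 0 < α
  deta : ∀ p ∈ s, ∀ u v : V, dEta S.eta p u v = 0
  dphi : ∀ p ∈ s, ∀ u v w : V,
    fderiv ℝ (fun q => FPhi S q v w) p u - fderiv ℝ (fun q => FPhi S q u w) p v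
      + fderiv ℝ (fun q => FPhi S q u v) p w
    = 2 * α * (S.eta p u * FPhi S p v w - S.eta p v * FPhi S p u w
        + S.eta p w * FPhi S p u v)

/-- Nijenhuis torsion `[φ,φ](u,v)` at `p` (constant extensions). -/
def nijPhi (phi : V → V → V) (p u v : V) : V :=
  fderiv ℝ (fun q => phi q v) p (phi p u) - fderiv ℝ (fun q => phi q u) p (phi p v)
    + phi p (fderiv ℝ (fun q => phi q u) p v) - phi p (fderiv ℝ (fun q => phi q v) p u)

/-- Normality: `N = [φ,φ] + 2 dη ⊗ ξ = 0`. -/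
def IsNormal (s : Set V) (S : ACM s) : Prop :=
  ∀ p ∈ s, ∀ u v : V, nijPhi S.phi p u v + (2 * dEta S.eta p u v) • S.xi p = 0

/-- CR-integrability: the Nijenhuis torsion of φ vanishes on `D = ker η`
(equivalently the integral manifolds of `D` are Kähler). -/
def CRIntegrableOn (s : Set V) (S : ACM s) : Prop :=
  ∀ p ∈ s, ∀ u v : V, S.eta p u = 0 → S.eta p v = 0 → nijPhi S.phi p u v = 0

/-- `ξ` belongs to the (κ,μ)'-nullity distribution. -/
def KMuNullity (s : Set V) (S : ACM s) (α κ μ : ℝ) (Γ : V → V → V → V) : Prop :=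
  ∀ p ∈ s, ∀ u v : V,
    Rm Γ p u v (S.xi p)
      = κ • (S.eta p v • u - S.eta p u • v)
        + μ • (S.eta p v • hpr α S.phi S.xi p u - S.eta p u • hpr α S.phi S.xi p v)

/-- `h'` is η-parallel. -/
def EtaParallelH (s : Set V) (S : ACM s) (α : ℝ) (Γ : V → V → V → V) : Prop :=
  ∀ p ∈ s, ∀ u v w : V, S.eta p u = 0 → S.eta p v = 0 → S.eta p w = 0 →
    S.g p (covOp Γ (hpr α S.phi S.xi) p u v) w = 0

/-- `∇_ξ h' = 0`. -/
def XiParallelH (s : Set V) (S : ACM s) (α : ℝ) (Γ : V → V → V → V) : Prop :=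
  ∀ p ∈ s, ∀ v : V, covOp Γ (hpr α S.phi S.xi) p (S.xi p) v = 0

/-- The canonical connection `∇̃_X Y = ∇_X Y + α g(X + h'X, Y)ξ − α η(Y)(X + h'X)`. -/
def canonical {s : Set V} (α : ℝ) (S : ACM s) (Γ : V → V → V → V) : V → V → V → V :=
  fun p u v =>
    Γ p u v + (α * S.g p (u + hpr α S.phi S.xi p u) v) • S.xi p
      - (α * S.eta p v) • (u + hpr α S.phi S.xi p u)

def ParallelTorsion (s : Set V) (Γ : V → V → V → V) : Prop :=
  ∀ p ∈ s, ∀ x u v : V, covT2 Γ (torsion Γ) p x u v = 0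

def ParallelCurv (s : Set V) (Γ : V → V → V → V) : Prop :=
  ∀ p ∈ s, ∀ x u v w : V, covT3 Γ (Rm Γ) p x u v w = 0

def FlatCurv (s : Set V) (Γ : V → V → V → V) : Prop :=
  ∀ p ∈ s, ∀ u v w : V, Rm Γ p u v w = 0

def HasEigen (h : V → V) (c : ℝ) : Prop := ∃ u : V, u ≠ 0 ∧ h u = c • u

/-- Multiplicity of the eigenvalue `c` of a (pointwise linear) operator. -/
def eigMult (h : V → V) (c : ℝ) : ℕ :=
  Module.finrank ℝ ↥(Submodule.span ℝ {u : V | h u = c • u})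

/-- `0` is a simple eigenvalue of `h'`: its kernel is spanned by `ξ`. -/
def KernelIsXiLine (xi₀ : V) (h : V → V) : Prop :=
  ∀ u : V, h u = 0 → ∃ a : ℝ, u = a • xi₀

def hprNonzero (s : Set V) (S : ACM s) (α : ℝ) : Prop :=
  ∃ p ∈ s, ∃ u : V, hpr α S.phi S.xi p u ≠ 0

/-- `S'` is the D-homothetic deformation of `S` with constant `β`. -/
def IsDHom (s : Set V) (S S' : ACM s) (β : ℝ) : Prop :=
  ∀ p ∈ s,
    (∀ u : V, S'.phi p u = S.phi p u) ∧ S'.xi p = β⁻¹ • S.xi p ∧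
    (∀ u : V, S'.eta p u = β * S.eta p u) ∧
    (∀ u v : V, S'.g p u v = β * S.g p u v + β * (β - 1) * (S.eta p u * S.eta p v))

/-- Local equivalence of almost contact metric structures. -/
def LocallyEquivalent (s : Set V) (S : ACM s) (s' : Set V) (S' : ACM s') : Prop :=
  ∀ p ∈ s, ∀ q ∈ s', ∃ (U U' : Set V) (f finv : V → V),
    p ∈ U ∧ IsOpen U ∧ U ⊆ s ∧ q ∈ U' ∧ IsOpen U' ∧ U' ⊆ s' ∧ f p = q ∧
    ContDiffOn ℝ (⊤ : ℕ∞) f U ∧ Set.BijOn f U U' ∧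
    ContDiffOn ℝ (⊤ : ℕ∞) finv U' ∧ (∀ x ∈ U, finv (f x) = x) ∧
    ∀ x ∈ U,
      fderiv ℝ f x (S.xi x) = S'.xi (f x) ∧
      (∀ u : V, fderiv ℝ f x (S.phi x u) = S'.phi (f x) (fderiv ℝ f x u)) ∧
      (∀ u : V, S'.eta (f x) (fderiv ℝ f x u) = S.eta x u) ∧
      (∀ u v : V, S'.g (f x) (fderiv ℝ f x u) (fderiv ℝ f x v) = S.g x u v)

/-- Local equivalence up to a D-homothetic deformation. -/
def EquivUpToDHom (s : Set V) (S : ACM s) (s' : Set V) (S' : ACM s') : Prop :=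
  ∃ β : ℝ, 0 < β ∧ ∃ S₁ : ACM s, IsDHom s S S₁ β ∧ LocallyEquivalent s S₁ s' S'

/-- Involutivity (integrability) of a distribution. -/
def IsInvolutive (s : Set V) (D : V → Set V) : Prop :=
  ∀ X Y : V → V, (∀ p ∈ s, DifferentiableAt ℝ X p) → (∀ p ∈ s, DifferentiableAt ℝ Y p) →
    (∀ p ∈ s, X p ∈ D p) → (∀ p ∈ s, Y p ∈ D p) →
    ∀ p ∈ s, fderiv ℝ Y p (X p) - fderiv ℝ X p (Y p) ∈ D p

/-- The leaves of the distribution `D` are totally geodesic. -/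
def TotallyGeodesicDist (s : Set V) (D : V → Set V) (Γ : V → V → V → V) : Prop :=
  ∀ X Y : V → V, (∀ p ∈ s, DifferentiableAt ℝ X p) → (∀ p ∈ s, DifferentiableAt ℝ Y p) →
    (∀ p ∈ s, X p ∈ D p) → (∀ p ∈ s, Y p ∈ D p) →
    ∀ p ∈ s, cov Γ Y p (X p) ∈ D p

/-- The leaves of the distribution `D` are totally umbilical. -/
def TotallyUmbilicalDist (s : Set V) (D : V → Set V) (g : V → V → V → ℝ)
    (Γ : V → V → V → V) : Prop :=
  ∃ H : V → V, (∀ p ∈ s, ∀ w ∈ D p, g p (H p) w = 0) ∧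
    ∀ X Y : V → V, (∀ p ∈ s, DifferentiableAt ℝ X p) → (∀ p ∈ s, DifferentiableAt ℝ Y p) →
      (∀ p ∈ s, X p ∈ D p) → (∀ p ∈ s, Y p ∈ D p) →
      ∀ p ∈ s, cov Γ Y p (X p) - g p (X p) (Y p) • H p ∈ D p

/-- The eigendistribution `[λ]` of `h'`. -/
def eigDist {s : Set V} (α : ℝ) (S : ACM s) (lam : ℝ) : V → Set V :=
  fun p => {u : V | hpr α S.phi S.xi p u = lam • u ∧ S.eta p u = 0}

/-- The distribution `[ξ] ⊕ [λ]`. -/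
def xiPlusEigDist {s : Set V} (α : ℝ) (S : ACM s) (lam : ℝ) : V → Set V :=
  fun p => {u : V | hpr α S.phi S.xi p u = lam • (u - S.eta p u • S.xi p)}

/-- An almost Hermitian structure on an open set of `E m`. -/
structure AHerm (m : ℕ) (W : Set (E m)) where
  J : E m → E m → E m
  h : E m → E m → E m → ℝ
  smooth_J : ∀ u : E m, ContDiffOn ℝ (⊤ : ℕ∞) (fun p => J p u) W
  lin_J : ∀ p ∈ W, IsLinearMap ℝ (J p)
  metric : IsMetricOn W h
  J_sq : ∀ p ∈ W, ∀ u : E m, J p (J p u) = -u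
  compat : ∀ p ∈ W, ∀ u v : E m, h p (J p u) (J p v) = h p u v

/-- The Kähler form of an almost Hermitian structure. -/
def Kform {m : ℕ} {W : Set (E m)} (K : AHerm m W) (p u v : E m) : ℝ := K.h p u (K.J p v)

/-- Almost Kähler: the Kähler form is closed. -/
def IsAlmostKaehler {m : ℕ} {W : Set (E m)} (K : AHerm m W) : Prop :=
  ∀ p ∈ W, ∀ u v w : E m,
    fderiv ℝ (fun q => Kform K q v w) p u - fderiv ℝ (fun q => Kform K q u w) p v
      + fderiv ℝ (fun q => Kform K q u v) p w = 0

/-- Kähler: almost Kähler with integrable `J`. -/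
def IsKaehler {m : ℕ} {W : Set (E m)} (K : AHerm m W) : Prop :=
  IsAlmostKaehler K ∧ ∀ p ∈ W, ∀ u v : E m, nijPhi K.J p u v = 0

/-- `M` is locally a warped product `M' ×_f N` of an open interval and an almost
Kähler manifold, with warping function `f = c e^{α t}`. -/
def LocWarpedIntervalAK (n : ℕ) (s : Set (E (2*n+1))) (S : ACM s) (α : ℝ) : Prop :=
  ∀ p ∈ s, ∃ (U : Set (E (2*n+1))) (I : Set ℝ) (W : Set (E (2*n)))
    (K : AHerm (2*n) W) (c : ℝ) (ψ : E (2*n+1) → ℝ × E (2*n))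
    (χ : ℝ × E (2*n) → E (2*n+1)),
    p ∈ U ∧ IsOpen U ∧ U ⊆ s ∧ IsOpen I ∧ I.OrdConnected ∧ IsOpen W ∧
    IsAlmostKaehler K ∧ 0 < c ∧
    ContDiffOn ℝ (⊤ : ℕ∞) ψ U ∧ Set.BijOn ψ U (I ×ˢ W) ∧
    ContDiffOn ℝ (⊤ : ℕ∞) χ (I ×ˢ W) ∧ (∀ x ∈ U, χ (ψ x) = x) ∧
    ∀ q ∈ U, ∀ u v : E (2*n+1),
      S.g q u v = (fderiv ℝ ψ q u).1 * (fderiv ℝ ψ q v).1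
        + (c * Real.exp (α * (ψ q).1))^2
          * K.h (ψ q).2 (fderiv ℝ ψ q u).2 (fderiv ℝ ψ q v).2

/-- Local isometry with a Riemannian product of constant curvature manifolds. -/
def LocIsomProd (m n₁ n₂ : ℕ) (s : Set (E m)) (g : E m → E m → E m → ℝ)
    (k₁ k₂ : ℝ) : Prop :=
  ∀ p ∈ s, ∃ (U : Set (E m)) (W₁ : Set (E n₁)) (W₂ : Set (E n₂))
    (g₁ : E n₁ → E n₁ → E n₁ → ℝ) (g₂ : E n₂ → E n₂ → E n₂ → ℝ)
    (ψ : E m → E n₁ × E n₂) (χ : E n₁ × E n₂ → E m),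
    p ∈ U ∧ IsOpen U ∧ U ⊆ s ∧ IsOpen W₁ ∧ IsOpen W₂ ∧
    IsMetricOn W₁ g₁ ∧ IsMetricOn W₂ g₂ ∧
    HasConstCurv W₁ g₁ k₁ ∧ HasConstCurv W₂ g₂ k₂ ∧
    ContDiffOn ℝ (⊤ : ℕ∞) ψ U ∧ Set.BijOn ψ U (W₁ ×ˢ W₂) ∧
    ContDiffOn ℝ (⊤ : ℕ∞) χ (W₁ ×ˢ W₂) ∧ (∀ x ∈ U, χ (ψ x) = x) ∧
    ∀ q ∈ U, ∀ u v : E m,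
      g q u v = g₁ (ψ q).1 (fderiv ℝ ψ q u).1 (fderiv ℝ ψ q v).1
        + g₂ (ψ q).2 (fderiv ℝ ψ q u).2 (fderiv ℝ ψ q v).2

/-- The axioms characterizing the canonical connection of a CR-integrable
almost α-Kenmotsu structure: `φ`, `g`, `η` parallel, together with the
torsion conditions a), b), c). -/
def IsCanonicalFor (s : Set V) (S : ACM s) (α : ℝ) (Γt : V → V → V → V) : Prop :=
  IsConnectionOn s Γt ∧
  (∀ p ∈ s, ∀ u v : V, covOp Γt S.phi p u v = 0) ∧
  (∀ p ∈ s, ∀ u v w : V,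
    fderiv ℝ (fun q => S.g q v w) p u = S.g p (Γt p u v) w + S.g p v (Γt p u w)) ∧
  (∀ p ∈ s, ∀ u v : V, fderiv ℝ (fun q => S.eta q v) p u = S.eta p (Γt p u v)) ∧
  (∀ p ∈ s, ∀ u v : V, S.eta p u = 0 → S.eta p v = 0 → torsion Γt p u v = 0) ∧
  (∀ p ∈ s, ∀ u : V, S.eta p u = 0 →
    (2 : ℝ) • torsion Γt p (S.xi p) u = α • (u + hpr α S.phi S.xi p u)) ∧
  (∀ p ∈ s, ∀ u v : V, S.g p (torsion Γt p (S.xi p) u) v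
    = S.g p u (torsion Γt p (S.xi p) v))

variable {V : Type*} [NormedAddCommGroup V] [NormedSpace ℝ V]
variable {W : Type*} [NormedAddCommGroup W] [NormedSpace ℝ W]

section Bundle
variable [FiniteDimensional ℝ V]

noncomputable def bundle (T : V → V → W) : V → V →L[ℝ] W := fun q =>
  ∑ i, (LinearMap.toContinuousLinearMap ((Module.finBasis ℝ V).coord i)).smulRight
    (T q (Module.finBasis ℝ V i))

theorem bundle_apply {T : V → V → W} {q : V} (h : IsLinearMap ℝ (T q)) (u : V) :
    bundle T q u = T q u := by
  have h1 : bundle T q u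
      = ∑ i, ((Module.finBasis ℝ V).repr u i) • T q (Module.finBasis ℝ V i) := by
    simp [bundle, ContinuousLinearMap.sum_apply, ContinuousLinearMap.smulRight_apply,
      Module.Basis.coord_apply]
  rw [h1]
  conv_rhs => rw [← (Module.finBasis ℝ V).sum_repr u]
  have h2 := map_sum (IsLinearMap.mk' (T q) h)
    (fun i => ((Module.finBasis ℝ V).repr u i) • (Module.finBasis ℝ V i)) Finset.univ
  simp only [IsLinearMap.mk'_apply, map_smul] at h2
  rw [h2]

theorem bundle_contDiffOn {T : V → V → W} {s : Set V}
    (h : ∀ u, ContDiffOn ℝ (⊤ : ℕ∞) (fun q => T q u) s) :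
    ContDiffOn ℝ (⊤ : ℕ∞) (bundle T) s := by
  apply ContDiffOn.sum (fun i _ => ?_)
  exact (ContinuousLinearMap.smulRightL ℝ V W
    (LinearMap.toContinuousLinearMap ((Module.finBasis ℝ V).coord i))).contDiff.comp_contDiffOn
      (h _)

end Bundle

section Calc
variable {s : Set V} (hs : IsOpen s) {p : V} (hp : p ∈ s)

include hs hp in
theorem fderiv_congr_on {f g : V → W} (h : ∀ q ∈ s, f q = g q) :
    fderiv ℝ f p = fderiv ℝ g p :=
  Filter.EventuallyEq.fderiv_eq (Filter.eventuallyEq_of_mem (hs.mem_nhds hp) h)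

include hs hp in
theorem diffAt_of_contDiffOn {f : V → W} (h : ContDiffOn ℝ (⊤ : ℕ∞) f s) :
    DifferentiableAt ℝ f p :=
  (h.contDiffAt (hs.mem_nhds hp)).differentiableAt (by simp)

theorem fderiv_clm_const {F : V → V →L[ℝ] W} {p : V} (hF : DifferentiableAt ℝ F p) (w x : V) :
    fderiv ℝ (fun q => F q w) p x = fderiv ℝ F p x w := by
  rw [fderiv_clm_apply hF (differentiableAt_const w)]
  simp

theorem fderiv_clm_field {F : V → V →L[ℝ] W} {p : V} (hF : DifferentiableAt ℝ F p) {Y : V → V}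
    (hY : DifferentiableAt ℝ Y p) (x : V) :
    fderiv ℝ (fun q => F q (Y q)) p x = F p (fderiv ℝ Y p x) + fderiv ℝ F p x (Y p) := by
  rw [fderiv_clm_apply hF hY]
  simp

theorem fderiv_clm2_const {F : V → V →L[ℝ] V →L[ℝ] W} {p : V}
    (hF : DifferentiableAt ℝ F p) (a b x : V) :
    fderiv ℝ (fun q => F q a b) p x = fderiv ℝ F p x a b := by
  have h1 : DifferentiableAt ℝ (fun q => F q a) p := hF.clm_apply (differentiableAt_const a)
  have h2 := fderiv_clm_const (F := fun q => F q a) h1 b x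
  rw [show (fun q => F q a b) = (fun q => (fun q' => F q' a) q b) from rfl]
  rw [h2, fderiv_clm_const hF a x]

theorem fderiv_clm2_field {F : V → V →L[ℝ] V →L[ℝ] W} {p : V} (hF : DifferentiableAt ℝ F p)
    {X Y : V → V} (hX : DifferentiableAt ℝ X p) (hY : DifferentiableAt ℝ Y p) (x : V) :
    fderiv ℝ (fun q => F q (X q) (Y q)) p x
      = fderiv ℝ F p x (X p) (Y p) + F p (fderiv ℝ X p x) (Y p)
        + F p (X p) (fderiv ℝ Y p x) := by
  have hc : DifferentiableAt ℝ (fun q => F q (X q)) p := hF.clm_apply hX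
  rw [show (fun q => F q (X q) (Y q)) = (fun q => (fun q' => F q' (X q')) q (Y q)) from rfl,
    fderiv_clm_apply hc hY]
  simp only [ContinuousLinearMap.add_apply, ContinuousLinearMap.coe_comp', Function.comp_apply,
    ContinuousLinearMap.flip_apply]
  rw [fderiv_clm_apply hF hX]
  simp only [ContinuousLinearMap.add_apply, ContinuousLinearMap.coe_comp', Function.comp_apply,
    ContinuousLinearMap.flip_apply]
  abel

end Calc

section Algebra
variable {s : Set V} {S : ACM s} {p : V} (hp : p ∈ s)
include hp

theorem gsym (u v : V) : S.g p u v = S.g p v u := S.metric.2.1 p hp u v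

theorem glin1 (v : V) : IsLinearMap ℝ (fun u => S.g p u v) := S.metric.2.2.1 p hp v

theorem g_add1 (a b c : V) : S.g p (a + b) c = S.g p a c + S.g p b c :=
  (glin1 hp c).map_add a b

theorem g_smul1 (r : ℝ) (a c : V) : S.g p (r • a) c = r * S.g p a c :=
  (glin1 hp c).map_smul r a

theorem g_neg1 (a c : V) : S.g p (-a) c = - S.g p a c := (glin1 hp c).map_neg a

theorem g_sub1 (a b c : V) : S.g p (a - b) c = S.g p a c - S.g p b c :=
  (glin1 hp c).map_sub a b

theorem g_zero1 (c : V) : S.g p 0 c = 0 := (glin1 hp c).map_zero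

theorem g_add2 (c a b : V) : S.g p c (a + b) = S.g p c a + S.g p c b := by
  rw [gsym hp c (a+b), g_add1 hp, gsym hp a c, gsym hp b c]

theorem g_smul2 (r : ℝ) (c a : V) : S.g p c (r • a) = r * S.g p c a := by
  rw [gsym hp c (r • a), g_smul1 hp, gsym hp a c]

theorem g_neg2 (c a : V) : S.g p c (-a) = - S.g p c a := by
  rw [gsym hp c (-a), g_neg1 hp, gsym hp a c]

theorem g_sub2 (c a b : V) : S.g p c (a - b) = S.g p c a - S.g p c b := by
  rw [gsym hp c (a-b), g_sub1 hp, gsym hp a c, gsym hp b c]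

theorem g_zero2 (c : V) : S.g p c 0 = 0 := by
  rw [gsym hp c 0, g_zero1 hp]

theorem glin2 (u : V) : IsLinearMap ℝ (fun v => S.g p u v) :=
  ⟨fun a b => g_add2 hp u a b, fun r a => g_smul2 hp r u a⟩

theorem phi_add (a b : V) : S.phi p (a + b) = S.phi p a + S.phi p b :=
  (S.lin_phi p hp).map_add a b

theorem phi_smul (r : ℝ) (a : V) : S.phi p (r • a) = r • S.phi p a :=
  (S.lin_phi p hp).map_smul r a

theorem phi_neg (a : V) : S.phi p (-a) = - S.phi p a := (S.lin_phi p hp).map_neg a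

theorem phi_sub (a b : V) : S.phi p (a - b) = S.phi p a - S.phi p b :=
  (S.lin_phi p hp).map_sub a b

theorem phi_zero : S.phi p 0 = 0 := (S.lin_phi p hp).map_zero

theorem eta_add (a b : V) : S.eta p (a + b) = S.eta p a + S.eta p b :=
  (S.lin_eta p hp).map_add a b

theorem eta_smul (r : ℝ) (a : V) : S.eta p (r • a) = r * S.eta p a :=
  (S.lin_eta p hp).map_smul r a

theorem eta_neg (a : V) : S.eta p (-a) = - S.eta p a := (S.lin_eta p hp).map_neg a

theorem eta_sub (a b : V) : S.eta p (a - b) = S.eta p a - S.eta p b :=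
  (S.lin_eta p hp).map_sub a b

theorem eta_zero : S.eta p 0 = 0 := (S.lin_eta p hp).map_zero

theorem phi_xi : S.phi p (S.xi p) = 0 := by
  have h2 : S.phi p (S.phi p (S.xi p)) = 0 := by
    rw [S.phi_sq p hp, S.eta_xi p hp, one_smul, neg_add_cancel]
  have h3 : S.phi p (S.phi p (S.phi p (S.xi p)))
      = -(S.phi p (S.xi p)) + S.eta p (S.phi p (S.xi p)) • S.xi p := S.phi_sq p hp _
  rw [h2, phi_zero hp] at h3
  have h3' := h3.symm
  rw [neg_add_eq_zero] at h3'
  -- h3' : φ ξ = η(φ ξ) • ξ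
  have h5 : S.phi p (S.phi p (S.xi p)) = S.eta p (S.phi p (S.xi p)) • S.phi p (S.xi p) := by
    conv_lhs => rw [h3']
    exact phi_smul hp _ _
  rw [h2] at h5
  by_cases hc : S.eta p (S.phi p (S.xi p)) = 0
  · rw [h3', hc, zero_smul]
  · rcases smul_eq_zero.mp h5.symm with h | h
    · exact absurd h hc
    · exact h

theorem eta_phi (u : V) : S.eta p (S.phi p u) = 0 := by
  have h1 : S.phi p (S.phi p (S.phi p u))
      = -(S.phi p u) + S.eta p (S.phi p u) • S.xi p := S.phi_sq p hp _
  have h2 : S.phi p (S.phi p (S.phi p u)) = -(S.phi p u) := by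
    rw [S.phi_sq p hp u, phi_add hp, phi_neg hp, phi_smul hp, phi_xi hp, smul_zero, add_zero]
  rw [h2] at h1
  have h4 : S.eta p (S.phi p u) • S.xi p = 0 := by
    have := h1.symm
    rwa [add_comm, add_eq_right] at this
  have h5 := congrArg (S.eta p) h4
  rwa [eta_smul hp, eta_zero hp, S.eta_xi p hp, mul_one] at h5

theorem eta_eq_g (u : V) : S.eta p u = S.g p u (S.xi p) := by
  have h1 := S.compat p hp u (S.xi p)
  rw [phi_xi hp, g_zero2 hp, S.eta_xi p hp, mul_one] at h1
  linarith

theorem g_xi_xi : S.g p (S.xi p) (S.xi p) = 1 := by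
  rw [← eta_eq_g hp, S.eta_xi p hp]

theorem phi_skew (u v : V) : S.g p u (S.phi p v) = - S.g p (S.phi p u) v := by
  have h1 := S.compat p hp (S.phi p u) v
  rw [eta_phi hp u, zero_mul, sub_zero, S.phi_sq p hp u] at h1
  -- h1 : g (-u + η u • ξ) (φ v) = g (φ u) v
  rw [g_add1 hp, g_neg1 hp, g_smul1 hp] at h1
  have h2 : S.g p (S.xi p) (S.phi p v) = 0 := by
    rw [gsym hp, ← eta_eq_g hp, eta_phi hp]
  rw [h2, mul_zero, add_zero] at h1
  linarith

theorem nondeg {w : V} (h : ∀ u : V, S.g p u w = 0) : w = 0 := by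
  by_contra hw
  exact absurd (gsym hp w w ▸ h w) (ne_of_gt (S.metric.2.2.2 p hp w hw))

end Algebra

section SBundles
variable [FiniteDimensional ℝ V] {s : Set V}

def phiB (S : ACM s) : V → V →L[ℝ] V := bundle S.phi

def etaB (S : ACM s) : V → V →L[ℝ] ℝ := bundle S.eta

def gB (S : ACM s) : V → V →L[ℝ] V →L[ℝ] ℝ :=
  bundle (fun q a => bundle (fun r b => S.g r a b) q)

variable {S : ACM s}

theorem phiB_apply {q : V} (hq : q ∈ s) (u : V) : phiB S q u = S.phi q u :=
  bundle_apply (S.lin_phi q hq) u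

theorem etaB_apply {q : V} (hq : q ∈ s) (u : V) : etaB S q u = S.eta q u :=
  bundle_apply (S.lin_eta q hq) u

theorem gB_apply {q : V} (hq : q ∈ s) (a b : V) : gB S q a b = S.g q a b := by
  have hlin : IsLinearMap ℝ (fun a : V => bundle (fun r b => S.g r a b) q) := by
    constructor
    · intro x y
      ext w
      simp only [bundle, ContinuousLinearMap.sum_apply, ContinuousLinearMap.smulRight_apply,
        ContinuousLinearMap.add_apply]
      rw [← Finset.sum_add_distrib]
      congr 1; ext i
      rw [g_add1 hq, smul_add]
    · intro c x
      ext w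
      simp only [bundle, ContinuousLinearMap.sum_apply, ContinuousLinearMap.smulRight_apply,
        ContinuousLinearMap.coe_smul', Pi.smul_apply, Finset.smul_sum]
      congr 1; ext i
      rw [g_smul1 hq]
      rw [smul_comm]
      simp [mul_smul]
  have h1 : gB S q a = bundle (fun r b => S.g r a b) q := by
    have := bundle_apply (T := fun q a => bundle (fun r b => S.g r a b) q) hlin a
    exact this
  rw [h1, bundle_apply (glin2 hq a) b]

theorem phiB_contDiffOn : ContDiffOn ℝ (⊤ : ℕ∞) (phiB S) s :=
  bundle_contDiffOn S.smooth_phi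

theorem etaB_contDiffOn : ContDiffOn ℝ (⊤ : ℕ∞) (etaB S) s :=
  bundle_contDiffOn S.smooth_eta

theorem gB_contDiffOn : ContDiffOn ℝ (⊤ : ℕ∞) (gB S) s :=
  bundle_contDiffOn (fun a => bundle_contDiffOn (fun b => S.metric.1 a b))

variable (hs : IsOpen s) {p : V} (hp : p ∈ s)
include hs hp

theorem phiB_diffAt : DifferentiableAt ℝ (phiB S) p :=
  diffAt_of_contDiffOn hs hp phiB_contDiffOn

theorem etaB_diffAt : DifferentiableAt ℝ (etaB S) p :=
  diffAt_of_contDiffOn hs hp etaB_contDiffOn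

theorem gB_diffAt : DifferentiableAt ℝ (gB S) p :=
  diffAt_of_contDiffOn hs hp gB_contDiffOn

theorem xi_diffAt : DifferentiableAt ℝ S.xi p :=
  diffAt_of_contDiffOn hs hp S.smooth_xi

theorem fderiv_phi_eq (u x : V) :
    fderiv ℝ (fun q => S.phi q u) p x = fderiv ℝ (phiB S) p x u := by
  rw [fderiv_congr_on hs hp (f := fun q => S.phi q u) (g := fun q => phiB S q u)
    (fun q hq => (phiB_apply hq u).symm)]
  exact fderiv_clm_const (phiB_diffAt hs hp) u x

theorem fderiv_eta_eq (u x : V) :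
    fderiv ℝ (fun q => S.eta q u) p x = fderiv ℝ (etaB S) p x u := by
  rw [fderiv_congr_on hs hp (f := fun q => S.eta q u) (g := fun q => etaB S q u)
    (fun q hq => (etaB_apply hq u).symm)]
  exact fderiv_clm_const (etaB_diffAt hs hp) u x

theorem fderiv_g_eq (a b x : V) :
    fderiv ℝ (fun q => S.g q a b) p x = fderiv ℝ (gB S) p x a b := by
  rw [fderiv_congr_on hs hp (f := fun q => S.g q a b) (g := fun q => gB S q a b)
    (fun q hq => (gB_apply hq a b).symm)]
  exact fderiv_clm2_const (gB_diffAt hs hp) a b x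

end SBundles

section Geometry
variable [FiniteDimensional ℝ V] {s : Set V} {S : ACM s} {α : ℝ} {Γ : V → V → V → V} {p : V}
variable (hs : IsOpen s) (hAK : IsAK s S α) (hΓ : IsLeviCivitaOn s S.g Γ) (hp : p ∈ s)

section LC
include hΓ hp

theorem Γsym (u v : V) : Γ p u v = Γ p v u := hΓ.2.1 p hp u v

theorem Γ_add1 (a b c : V) : Γ p (a + b) c = Γ p a c + Γ p b c :=
  (hΓ.1.2.1 p hp c).map_add a b

theorem Γ_smul1 (r : ℝ) (a c : V) : Γ p (r • a) c = r • Γ p a c :=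
  (hΓ.1.2.1 p hp c).map_smul r a

theorem Γ_add2 (c a b : V) : Γ p c (a + b) = Γ p c a + Γ p c b :=
  (hΓ.1.2.2 p hp c).map_add a b

theorem Γ_smul2 (r : ℝ) (c a : V) : Γ p c (r • a) = r • Γ p c a :=
  (hΓ.1.2.2 p hp c).map_smul r a

theorem Γ_zero2 (c : V) : Γ p c 0 = 0 := (hΓ.1.2.2 p hp c).map_zero

theorem B_add (a b : V) : cov Γ S.xi p (a + b) = cov Γ S.xi p a + cov Γ S.xi p b := by
  unfold cov
  rw [map_add, Γ_add1 hΓ hp]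
  abel

theorem B_smul (r : ℝ) (a : V) : cov Γ S.xi p (r • a) = r • cov Γ S.xi p a := by
  unfold cov
  rw [map_smul, Γ_smul1 hΓ hp, smul_add]

theorem B_neg (a : V) : cov Γ S.xi p (-a) = - cov Γ S.xi p a := by
  have := B_smul hΓ hp (-1 : ℝ) a
  simpa using this

end LC

include hs hAK hΓ hp

theorem Dg_eq (x a b : V) :
    fderiv ℝ (gB S) p x a b = S.g p (Γ p x a) b + S.g p a (Γ p x b) := by
  rw [← fderiv_g_eq hs hp]
  exact hΓ.2.2 p hp x a b

theorem Deta_eq (x u : V) :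
    fderiv ℝ (fun q => S.eta q u) p x
      = S.eta p (Γ p x u) + S.g p u (cov Γ S.xi p x) := by
  have hcongr : fderiv ℝ (fun q => S.eta q u) p = fderiv ℝ (fun q => gB S q u (S.xi q)) p := by
    apply fderiv_congr_on hs hp
    intro q hq
    rw [gB_apply hq, ← eta_eq_g hq]
  rw [hcongr]
  have hF : DifferentiableAt ℝ (fun q => gB S q u) p :=
    (gB_diffAt hs hp).clm_apply (differentiableAt_const u)
  rw [fderiv_clm_field hF (xi_diffAt hs hp) x]
  rw [fderiv_clm_const (gB_diffAt hs hp) u x, Dg_eq hs hAK hΓ hp, gB_apply hp]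
  rw [eta_eq_g hp (Γ p x u)]
  have : S.g p u (cov Γ S.xi p x)
      = S.g p u (fderiv ℝ S.xi p x) + S.g p u (Γ p x (S.xi p)) := by
    unfold cov; rw [g_add2 hp]
  rw [this]
  ring

theorem B_symm (v x : V) :
    S.g p v (cov Γ S.xi p x) = S.g p x (cov Γ S.xi p v) := by
  have h := hAK.deta p hp x v
  unfold dEta at h
  rw [Deta_eq hs hAK hΓ hp, Deta_eq hs hAK hΓ hp, Γsym hΓ hp x v] at h
  linarith

theorem B_eta (x : V) : S.g p (cov Γ S.xi p x) (S.xi p) = 0 := by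
  have hconst : fderiv ℝ (fun q => gB S q (S.xi q) (S.xi q)) p = fderiv ℝ (fun _ : V => (1:ℝ)) p := by
    apply fderiv_congr_on hs hp
    intro q hq
    rw [gB_apply hq, g_xi_xi hq]
  have h0 : fderiv ℝ (fun q => gB S q (S.xi q) (S.xi q)) p x = 0 := by
    rw [hconst, fderiv_fun_const]
    simp
  rw [fderiv_clm2_field (gB_diffAt hs hp) (xi_diffAt hs hp) (xi_diffAt hs hp) x] at h0
  rw [Dg_eq hs hAK hΓ hp, gB_apply hp, gB_apply hp] at h0
  -- h0 : g(Γxξ,ξ) + g(ξ,Γxξ) + g(Dξx,ξ) + g(ξ,Dξx) = 0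
  have hsym1 := gsym (S := S) hp (S.xi p) (Γ p x (S.xi p))
  have hsym2 := gsym (S := S) hp (S.xi p) (fderiv ℝ S.xi p x)
  have hexp : S.g p (cov Γ S.xi p x) (S.xi p)
      = S.g p (fderiv ℝ S.xi p x) (S.xi p) + S.g p (Γ p x (S.xi p)) (S.xi p) := by
    unfold cov; rw [g_add1 hp]
  rw [hexp]
  linarith

theorem B_xi : cov Γ S.xi p (S.xi p) = 0 := by
  have key : ∀ w : V, S.g p (cov Γ S.xi p (S.xi p)) (S.phi p w) = 0 := by
    intro w
    rw [gsym hp, B_symm hs hAK hΓ hp (S.phi p w) (S.xi p), gsym hp]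
    exact B_eta hs hAK hΓ hp (S.phi p w)
  set b := cov Γ S.xi p (S.xi p) with hb
  have hphib : S.phi p (-(S.phi p b)) = b := by
    rw [phi_neg hp, S.phi_sq p hp b]
    have : S.eta p b = 0 := by
      rw [eta_eq_g hp]
      exact B_eta hs hAK hΓ hp (S.xi p)
    rw [this, zero_smul, add_zero, neg_neg]
  have hbb : S.g p b b = 0 := by
    have := key (-(S.phi p b))
    rwa [hphib] at this
  by_contra hw
  exact absurd hbb (ne_of_gt (S.metric.2.2.2 p hp b hw))

theorem dFPhi (x a b : V) :
    fderiv ℝ (fun q => FPhi S q a b) p x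
      = fderiv ℝ (gB S) p x a (S.phi p b) + S.g p a (fderiv ℝ (phiB S) p x b) := by
  have hcongr : fderiv ℝ (fun q => FPhi S q a b) p
      = fderiv ℝ (fun q => gB S q a (phiB S q b)) p := by
    apply fderiv_congr_on hs hp
    intro q hq
    rw [gB_apply hq, phiB_apply hq]
    rfl
  rw [hcongr]
  have hF : DifferentiableAt ℝ (fun q => gB S q a) p :=
    (gB_diffAt hs hp).clm_apply (differentiableAt_const a)
  have hY : DifferentiableAt ℝ (fun q => phiB S q b) p :=
    (phiB_diffAt hs hp).clm_apply (differentiableAt_const b)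
  rw [fderiv_clm_field hF hY x, fderiv_clm_const (gB_diffAt hs hp) a x,
    fderiv_clm_const (phiB_diffAt hs hp) b x, gB_apply hp, phiB_apply hp]
  ring

theorem dFPhi_xi (x w : V) :
    fderiv ℝ (fun q => FPhi S q (S.xi p) w) p x
      = - S.g p (fderiv ℝ S.xi p x) (S.phi p w) := by
  have hcongr : fderiv ℝ (fun q => FPhi S q (S.xi p) w) p
      = fderiv ℝ (fun q => gB S q (S.xi p - S.xi q) (phiB S q w)) p := by
    apply fderiv_congr_on hs hp
    intro q hq
    show S.g q (S.xi p) (S.phi q w) = gB S q (S.xi p - S.xi q) (phiB S q w)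
    rw [gB_apply hq, phiB_apply hq, g_sub1 hq]
    have : S.g q (S.xi q) (S.phi q w) = 0 := by
      rw [gsym hq, ← eta_eq_g hq, eta_phi hq]
    rw [this, sub_zero]
  rw [hcongr]
  have hX : DifferentiableAt ℝ (fun q => S.xi p - S.xi q) p :=
    (differentiableAt_const (S.xi p)).sub (xi_diffAt hs hp)
  have hY : DifferentiableAt ℝ (fun q => phiB S q w) p :=
    (phiB_diffAt hs hp).clm_apply (differentiableAt_const w)
  rw [fderiv_clm2_field (gB_diffAt hs hp) hX hY x]
  have hXp : S.xi p - S.xi p = 0 := sub_self _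
  have hDX : fderiv ℝ (fun q => S.xi p - S.xi q) p x = - fderiv ℝ S.xi p x := by
    rw [fderiv_fun_sub (differentiableAt_const (S.xi p)) (xi_diffAt hs hp)]
    simp
  rw [hXp, hDX]
  simp only [map_zero, ContinuousLinearMap.zero_apply]
  rw [phiB_apply hp, gB_apply hp, g_neg1 hp]
  ring

theorem dagger (u v : V) :
    fderiv ℝ (gB S) p (S.xi p) u (S.phi p v)
      + S.g p u (fderiv ℝ (phiB S) p (S.xi p) v)
      + S.g p (fderiv ℝ S.xi p u) (S.phi p v)
      - S.g p (fderiv ℝ S.xi p v) (S.phi p u)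
      = 2 * α * S.g p u (S.phi p v) := by
  have h := hAK.dphi p hp (S.xi p) u v
  have hphi0 : ∀ a : V, FPhi S p (S.xi p) a = 0 := by
    intro a
    show S.g p (S.xi p) (S.phi p a) = 0
    rw [gsym hp, ← eta_eq_g hp, eta_phi hp]
  rw [dFPhi hs hAK hΓ hp, dFPhi_xi hs hAK hΓ hp, dFPhi_xi hs hAK hΓ hp, S.eta_xi p hp,
    hphi0 u, hphi0 v] at h
  have hΦ : FPhi S p u v = S.g p u (S.phi p v) := rfl
  rw [hΦ] at h
  linarith

omit hAK hΓ in
theorem hpr_eq (hα : α ≠ 0) (u : V) :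
    fderiv ℝ (phiB S) p (S.xi p) (S.phi p u)
      = (2*α) • hpr α S.phi S.xi p u
        + fderiv ℝ S.xi p (S.phi p (S.phi p u))
        - S.phi p (fderiv ℝ S.xi p (S.phi p u)) := by
  unfold hpr lieXiPhi
  rw [fderiv_phi_eq hs hp]
  rw [smul_smul]
  have : (2*α) * (1/(2*α)) = 1 := by field_simp
  rw [this, one_smul]
  abel

theorem star (v : V) :
    cov Γ S.xi p v
      = α • (v - S.eta p v • S.xi p + hpr α S.phi S.xi p v) := by
  have hα : α ≠ 0 := ne_of_gt hAK.pos
  have scalar : ∀ u : V, S.g p u (cov Γ S.xi p v)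
      = α * (S.g p u v - S.eta p u * S.eta p v + S.g p u (hpr α S.phi S.xi p v)) := by
    intro u
    have h := dagger hs hAK hΓ hp u (S.phi p v)
    rw [hpr_eq hs hp hα v] at h
    -- expand g p u ((2α)•Av + Dξ(φ²v) − φ(Dξ(φv)))
    have hexp : S.g p u ((2*α) • hpr α S.phi S.xi p v
        + fderiv ℝ S.xi p (S.phi p (S.phi p v))
        - S.phi p (fderiv ℝ S.xi p (S.phi p v)))
        = 2*α * S.g p u (hpr α S.phi S.xi p v)
          + S.g p u (fderiv ℝ S.xi p (S.phi p (S.phi p v)))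
          - S.g p u (S.phi p (fderiv ℝ S.xi p (S.phi p v))) := by
      rw [g_sub2 hp, g_add2 hp, g_smul2 hp]
    rw [hexp] at h
    -- the skew terms cancel
    have hskew : S.g p u (S.phi p (fderiv ℝ S.xi p (S.phi p v)))
        = - S.g p (S.phi p u) (fderiv ℝ S.xi p (S.phi p v)) := phi_skew hp _ _
    have hskew2 : S.g p (fderiv ℝ S.xi p (S.phi p v)) (S.phi p u)
        = S.g p (S.phi p u) (fderiv ℝ S.xi p (S.phi p v)) := gsym hp _ _
    rw [hskew, hskew2] at h
    -- now with w := φ²v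
    set w := S.phi p (S.phi p v) with hw
    -- h : Dg(ξ,u,w) + (2α g(u,Av) + g(u,Dξw)) + g(Dξu, w) = 2α g(u,w)  (after cancel)
    have hDg := Dg_eq hs hAK hΓ hp (S.xi p) u w
    rw [hDg] at h
    -- combine into B
    have hBu : S.g p (Γ p (S.xi p) u) w + S.g p (fderiv ℝ S.xi p u) w
        = S.g p (cov Γ S.xi p u) w := by
      unfold cov
      rw [Γsym hΓ hp (S.xi p) u, g_add1 hp]
      ring
    have hBw : S.g p u (Γ p (S.xi p) w) + S.g p u (fderiv ℝ S.xi p w)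
        = S.g p u (cov Γ S.xi p w) := by
      unfold cov
      rw [Γsym hΓ hp (S.xi p) w, g_add2 hp]
      ring
    -- φ²v = -v + η v • ξ
    have hw2 : w = -v + S.eta p v • S.xi p := S.phi_sq p hp v
    have hBww : cov Γ S.xi p w = - cov Γ S.xi p v := by
      rw [hw2, B_add hΓ hp, B_neg hΓ hp, B_smul hΓ hp, B_xi hs hAK hΓ hp, smul_zero, add_zero]
    have hguw : S.g p u w = - S.g p u v + S.eta p v * S.eta p u := by
      rw [hw2, g_add2 hp, g_neg2 hp, g_smul2 hp, ← eta_eq_g hp]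
    have hgBuw : S.g p (cov Γ S.xi p u) w
        = - S.g p (cov Γ S.xi p u) v := by
      rw [hw2, g_add2 hp, g_neg2 hp, g_smul2 hp, B_eta hs hAK hΓ hp u, mul_zero, add_zero]
    have hgBv : S.g p u (cov Γ S.xi p w) = - S.g p u (cov Γ S.xi p v) := by
      rw [hBww, g_neg2 hp]
    have hBsym : S.g p (cov Γ S.xi p u) v = S.g p u (cov Γ S.xi p v) := by
      rw [gsym hp]
      exact B_symm hs hAK hΓ hp v u
    -- assemble: from h derive the claim
    linear_combination (norm := ring) (-1/2 : ℝ) * h + (1/2 : ℝ) * hBu + (1/2 : ℝ) * hBw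
      + (1/2 : ℝ) * hgBuw + (1/2 : ℝ) * hgBv + (-α) * hguw + (-1/2 : ℝ) * hBsym
  have hzero : ∀ u : V, S.g p u (cov Γ S.xi p v
      - α • (v - S.eta p v • S.xi p + hpr α S.phi S.xi p v)) = 0 := by
    intro u
    rw [g_sub2 hp, g_smul2 hp, g_add2 hp, g_sub2 hp, g_smul2 hp, ← eta_eq_g hp, scalar u]
    ring
  have := nondeg hp (fun u => hzero u)
  linear_combination (norm := abel) this
end Geometry

section Cor
variable [FiniteDimensional ℝ V] {s : Set V} {S : ACM s} {α : ℝ} {Γ : V → V → V → V} {p : V}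
variable (hs : IsOpen s) (hAK : IsAK s S α) (hΓ : IsLeviCivitaOn s S.g Γ) (hp : p ∈ s)
include hs hAK hΓ hp

theorem eta_hpr (v : V) : S.eta p (hpr α S.phi S.xi p v) = 0 := by
  have hα : α ≠ 0 := ne_of_gt hAK.pos
  have h1 : S.eta p (cov Γ S.xi p v) = 0 := by
    rw [eta_eq_g hp]
    exact B_eta hs hAK hΓ hp v
  rw [star hs hAK hΓ hp v, eta_smul hp, eta_add hp, eta_sub hp, eta_smul hp, S.eta_xi p hp,
    mul_one, sub_self, zero_add] at h1
  rcases mul_eq_zero.mp h1 with h | h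
  · exact absurd h hα
  · exact h

theorem hpr_xi : hpr α S.phi S.xi p (S.xi p) = 0 := by
  have hα : α ≠ 0 := ne_of_gt hAK.pos
  have h1 := star hs hAK hΓ hp (S.xi p)
  rw [B_xi hs hAK hΓ hp, S.eta_xi p hp, one_smul, sub_self, zero_add] at h1
  rcases smul_eq_zero.mp h1.symm with h | h
  · exact absurd h hα
  · exact h

theorem smul_hpr (w : V) : α • hpr α S.phi S.xi p w
    = cov Γ S.xi p w - α • w + (α * S.eta p w) • S.xi p := by
  rw [star hs hAK hΓ hp w, smul_add, smul_sub, smul_smul]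
  abel

theorem hpr_symm (u v : V) :
    S.g p (hpr α S.phi S.xi p u) v = S.g p u (hpr α S.phi S.xi p v) := by
  have hα : α ≠ 0 := ne_of_gt hAK.pos
  have h1 := congrArg (fun z => S.g p z v) (smul_hpr hs hAK hΓ hp u)
  beta_reduce at h1
  rw [g_smul1 hp, g_add1 hp, g_sub1 hp, g_smul1 hp, g_smul1 hp] at h1
  have h2 := congrArg (fun z => S.g p u z) (smul_hpr hs hAK hΓ hp v)
  beta_reduce at h2
  rw [g_smul2 hp, g_add2 hp, g_sub2 hp, g_smul2 hp, g_smul2 hp] at h2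
  have hBsym : S.g p (cov Γ S.xi p u) v = S.g p u (cov Γ S.xi p v) := by
    rw [gsym hp]
    exact B_symm hs hAK hΓ hp v u
  have hgxiv : S.g p (S.xi p) v = S.eta p v := by rw [gsym hp, ← eta_eq_g hp]
  have hgu : S.g p u (S.xi p) = S.eta p u := (eta_eq_g hp u).symm
  have hguv : S.g p u v = S.g p v u := gsym hp u v
  rw [hgxiv] at h1
  rw [hgu] at h2
  have : α * S.g p (hpr α S.phi S.xi p u) v = α * S.g p u (hpr α S.phi S.xi p v) := by
    linear_combination h1 - h2 + hBsym
  exact mul_left_cancel₀ hα this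

end Cor

section HprB
variable [FiniteDimensional ℝ V] {s : Set V}

def hprB (S : ACM s) (α : ℝ) : V → V →L[ℝ] V := fun q =>
  (1/(2*α)) • ((fderiv ℝ (phiB S) q (S.xi q)).comp (phiB S q)
    - (fderiv ℝ S.xi q).comp ((phiB S q).comp (phiB S q))
    + (phiB S q).comp ((fderiv ℝ S.xi q).comp (phiB S q)))

variable {S : ACM s} {α : ℝ} (hs : IsOpen s)
include hs

theorem hprB_apply {q : V} (hq : q ∈ s) (u : V) :
    hprB S α q u = hpr α S.phi S.xi q u := by
  unfold hprB hpr lieXiPhi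
  simp only [ContinuousLinearMap.coe_smul', Pi.smul_apply, ContinuousLinearMap.add_apply,
    ContinuousLinearMap.sub_apply, ContinuousLinearMap.coe_comp', Function.comp_apply]
  simp only [phiB_apply hq]
  rw [← fderiv_phi_eq hs hq]

theorem hprB_contDiffOn : ContDiffOn ℝ (⊤ : ℕ∞) (hprB S α) s := by
  have hle : ((⊤ : ℕ∞) : WithTop ℕ∞) + 1 ≤ ((⊤ : ℕ∞) : WithTop ℕ∞) := by
    simp
  have hdphi : ContDiffOn ℝ (⊤ : ℕ∞) (fderiv ℝ (phiB S)) s :=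
    phiB_contDiffOn.fderiv_of_isOpen hs hle
  have hdxi : ContDiffOn ℝ (⊤ : ℕ∞) (fderiv ℝ S.xi) s :=
    S.smooth_xi.fderiv_of_isOpen hs hle
  apply ContDiffOn.const_smul
  apply ContDiffOn.add
  apply ContDiffOn.sub
  · exact (hdphi.clm_apply S.smooth_xi).clm_comp phiB_contDiffOn
  · exact hdxi.clm_comp (phiB_contDiffOn.clm_comp phiB_contDiffOn)
  · exact phiB_contDiffOn.clm_comp (hdxi.clm_comp phiB_contDiffOn)

variable {p : V} (hp : p ∈ s)
include hp

theorem hprB_diffAt : DifferentiableAt ℝ (hprB S α) p :=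
  diffAt_of_contDiffOn hs hp (hprB_contDiffOn hs)

theorem fderiv_hpr_eq (v x : V) :
    fderiv ℝ (fun q => hpr α S.phi S.xi q v) p x = fderiv ℝ (hprB S α) p x v := by
  rw [fderiv_congr_on hs hp (f := fun q => hpr α S.phi S.xi q v) (g := fun q => hprB S α q v)
    (fun q hq => (hprB_apply hs hq v).symm)]
  exact fderiv_clm_const (hprB_diffAt hs hp) v x

theorem hpr_add (a b : V) : hpr α S.phi S.xi p (a + b)
    = hpr α S.phi S.xi p a + hpr α S.phi S.xi p b := by
  rw [← hprB_apply hs hp, ← hprB_apply hs hp, ← hprB_apply hs hp, map_add]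

theorem hpr_smul (r : ℝ) (a : V) : hpr α S.phi S.xi p (r • a) = r • hpr α S.phi S.xi p a := by
  rw [← hprB_apply hs hp, ← hprB_apply hs hp, map_smul]

theorem hpr_zero : hpr α S.phi S.xi p 0 = 0 := by
  rw [← hprB_apply hs hp, map_zero]

theorem hpr_sub (a b : V) : hpr α S.phi S.xi p (a - b)
    = hpr α S.phi S.xi p a - hpr α S.phi S.xi p b := by
  rw [← hprB_apply hs hp, ← hprB_apply hs hp, ← hprB_apply hs hp, map_sub]

end HprB

section Canon
variable [FiniteDimensional ℝ V] {s : Set V} {S : ACM s} {α : ℝ} {Γ : V → V → V → V} {p : V}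
variable (hs : IsOpen s) (hAK : IsAK s S α) (hΓ : IsLeviCivitaOn s S.g Γ) (hp : p ∈ s)
include hs hAK hΓ hp

theorem hpr_neg (a : V) : hpr α S.phi S.xi p (-a) = - hpr α S.phi S.xi p a := by
  rw [← hprB_apply hs hp, ← hprB_apply hs hp, map_neg]

theorem can_add2 (x a b : V) :
    canonical α S Γ p x (a + b) = canonical α S Γ p x a + canonical α S Γ p x b := by
  unfold canonical
  rw [Γ_add2 hΓ hp, g_add2 hp, eta_add hp]
  module

theorem can_smul2 (x : V) (r : ℝ) (a : V) :
    canonical α S Γ p x (r • a) = r • canonical α S Γ p x a := by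
  unfold canonical
  rw [Γ_smul2 hΓ hp, g_smul2 hp, eta_smul hp]
  module

theorem can_sub2 (x a b : V) :
    canonical α S Γ p x (a - b) = canonical α S Γ p x a - canonical α S Γ p x b := by
  have h1 : a - b = a + (-1 : ℝ) • b := by module
  rw [h1, can_add2 hs hAK hΓ hp, can_smul2 hs hAK hΓ hp]
  module

theorem can_zero2 (x : V) : canonical α S Γ p x 0 = 0 := by
  have := can_smul2 hs hAK hΓ hp x 0 (0 : V)
  simpa using this

theorem can_xi2 (x : V) :
    canonical α S Γ p x (S.xi p) = - fderiv ℝ S.xi p x := by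
  unfold canonical
  rw [S.eta_xi p hp]
  have hg : S.g p (x + hpr α S.phi S.xi p x) (S.xi p) = S.eta p x := by
    rw [g_add1 hp, ← eta_eq_g hp, ← eta_eq_g hp, eta_hpr hs hAK hΓ hp, add_zero]
  rw [hg]
  have hΓx : Γ p x (S.xi p)
      = α • (x - S.eta p x • S.xi p + hpr α S.phi S.xi p x) - fderiv ℝ S.xi p x := by
    rw [← star hs hAK hΓ hp x]
    unfold cov
    abel
  rw [hΓx]
  module

theorem can_eta (x u : V) :
    S.eta p (canonical α S Γ p x u) = fderiv ℝ (fun q => S.eta q u) p x := by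
  rw [Deta_eq hs hAK hΓ hp]
  unfold canonical
  rw [eta_sub hp, eta_add hp, eta_smul hp, eta_smul hp, S.eta_xi p hp,
    eta_add hp x (hpr α S.phi S.xi p x), eta_hpr hs hAK hΓ hp, add_zero,
    star hs hAK hΓ hp x, g_smul2 hp, g_add2 hp, g_sub2 hp, g_smul2 hp, ← eta_eq_g hp,
    g_add1 hp]
  have h1 : S.g p (hpr α S.phi S.xi p x) u = S.g p u (hpr α S.phi S.xi p x) := gsym hp _ _
  have h2 : S.g p x u = S.g p u x := gsym hp _ _
  rw [h1, h2]
  ring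

theorem covOp_can_eq (u v : V) :
    covOp (canonical α S Γ) (hpr α S.phi S.xi) p u v
      = covOp Γ (hpr α S.phi S.xi) p u v
        + (α * S.g p (u + hpr α S.phi S.xi p u) (hpr α S.phi S.xi p v)) • S.xi p
        + (α * S.eta p v) • (hpr α S.phi S.xi p u
            + hpr α S.phi S.xi p (hpr α S.phi S.xi p u)) := by
  unfold covOp canonical
  rw [eta_hpr hs hAK hΓ hp v, mul_zero, zero_smul, sub_zero]
  rw [hpr_sub hs hp, hpr_add hs hp, hpr_smul hs hp, hpr_smul hs hp,
    hpr_xi hs hAK hΓ hp, hpr_add hs hp u]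
  module

theorem fderiv_hpr_xiconst (x : V) :
    fderiv ℝ (fun q => hpr α S.phi S.xi q (S.xi p)) p x
      = - hpr α S.phi S.xi p (fderiv ℝ S.xi p x) := by
  have hcongr : fderiv ℝ (fun q => hpr α S.phi S.xi q (S.xi p)) p
      = fderiv ℝ (fun q => hprB S α q (S.xi p - S.xi q)) p := by
    apply fderiv_congr_on hs hp
    intro q hq
    rw [map_sub, hprB_apply hs hq, hprB_apply hs hq, hpr_xi hs hAK hΓ hq, sub_zero]
  rw [hcongr]
  have hY : DifferentiableAt ℝ (fun q => S.xi p - S.xi q) p :=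
    (differentiableAt_const _).sub (xi_diffAt hs hp)
  rw [fderiv_clm_field (hprB_diffAt hs hp) hY x]
  have hDY : fderiv ℝ (fun q => S.xi p - S.xi q) p x = - fderiv ℝ S.xi p x := by
    rw [fderiv_fun_sub (differentiableAt_const _) (xi_diffAt hs hp)]
    simp
  rw [hDY, sub_self, map_zero, map_neg, hprB_apply hs hp]
  simp

theorem covOp_xi2 (u : V) :
    covOp Γ (hpr α S.phi S.xi) p u (S.xi p)
      = - hpr α S.phi S.xi p (cov Γ S.xi p u) := by
  unfold covOp
  rw [fderiv_hpr_xiconst hs hAK hΓ hp u, hpr_xi hs hAK hΓ hp, Γ_zero2 hΓ hp]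
  unfold cov
  rw [hpr_add hs hp]
  abel

theorem covOp_can_xi2 (u : V) :
    covOp (canonical α S Γ) (hpr α S.phi S.xi) p u (S.xi p) = 0 := by
  unfold covOp
  rw [fderiv_hpr_xiconst hs hAK hΓ hp u, hpr_xi hs hAK hΓ hp, can_zero2 hs hAK hΓ hp u,
    can_xi2 hs hAK hΓ hp u, hpr_neg hs hAK hΓ hp]
  abel

theorem g_covOp_xi (u v : V) :
    S.g p (covOp Γ (hpr α S.phi S.xi) p u v) (S.xi p)
      = - S.g p (hpr α S.phi S.xi p v) (cov Γ S.xi p u) := by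
  have hzero : fderiv ℝ (fun q => gB S q (hprB S α q v) (S.xi q)) p
      = fderiv ℝ (fun _ : V => (0:ℝ)) p := by
    apply fderiv_congr_on hs hp
    intro q hq
    rw [gB_apply hq, hprB_apply hs hq, ← eta_eq_g hq, eta_hpr hs hAK hΓ hq]
  have h0 : fderiv ℝ (fun q => gB S q (hprB S α q v) (S.xi q)) p u = 0 := by
    rw [hzero, fderiv_fun_const]
    simp
  have hX : DifferentiableAt ℝ (fun q => hprB S α q v) p :=
    (hprB_diffAt hs hp).clm_apply (differentiableAt_const v)
  rw [fderiv_clm2_field (gB_diffAt hs hp) hX (xi_diffAt hs hp) u] at h0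
  rw [Dg_eq hs hAK hΓ hp] at h0
  simp only [gB_apply hp] at h0
  simp only [hprB_apply hs hp] at h0
  have hDA : fderiv ℝ (fun q => hprB S α q v) p u
      = fderiv ℝ (fun q => hpr α S.phi S.xi q v) p u := by
    rw [fderiv_congr_on hs hp (f := fun q => hprB S α q v)
      (g := fun q => hpr α S.phi S.xi q v) (fun q hq => hprB_apply hs hq v)]
  rw [hDA] at h0
  -- h0 : g(Γ u (Av)) ξ + g(Av) (Γ u ξ) + g(DA) ξ + g(Av) (Dξ u) = 0
  unfold covOp
  rw [g_sub1 hp, g_add1 hp]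
  have hη : S.g p (hpr α S.phi S.xi p (Γ p u v)) (S.xi p) = 0 := by
    rw [← eta_eq_g hp, eta_hpr hs hAK hΓ hp]
  rw [hη]
  have hcov : S.g p (hpr α S.phi S.xi p v) (cov Γ S.xi p u)
      = S.g p (hpr α S.phi S.xi p v) (fderiv ℝ S.xi p u)
        + S.g p (hpr α S.phi S.xi p v) (Γ p u (S.xi p)) := by
    unfold cov
    rw [g_add2 hp]
  linarith
end Canon

section Tor
variable [FiniteDimensional ℝ V] {s : Set V} {S : ACM s} {α : ℝ} {Γ : V → V → V → V} {p : V}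
variable (hs : IsOpen s) (hAK : IsAK s S α) (hΓ : IsLeviCivitaOn s S.g Γ) (hp : p ∈ s)
include hs hAK hΓ hp

theorem tor_eq (u v : V) :
    torsion (canonical α S Γ) p u v
      = (α/2) • (S.eta p u • (v + hpr α S.phi S.xi p v)
          - S.eta p v • (u + hpr α S.phi S.xi p u)) := by
  unfold torsion canonical
  rw [Γsym hΓ hp u v]
  have hgg : S.g p (u + hpr α S.phi S.xi p u) v = S.g p (v + hpr α S.phi S.xi p v) u := by
    rw [g_add1 hp, g_add1 hp, hpr_symm hs hAK hΓ hp u v, gsym hp u v,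
      gsym hp u (hpr α S.phi S.xi p v)]
  rw [hgg]
  module

theorem fderiv_tor (x u v : V) :
    fderiv ℝ (fun q => torsion (canonical α S Γ) q u v) p x
      = (α/2) • ( S.eta p (canonical α S Γ p x u) • (v + hpr α S.phi S.xi p v)
          + S.eta p u • fderiv ℝ (hprB S α) p x v
          - S.eta p v • fderiv ℝ (hprB S α) p x u
          - S.eta p (canonical α S Γ p x v) • (u + hpr α S.phi S.xi p u) ) := by
  have hcongr : fderiv ℝ (fun q => torsion (canonical α S Γ) q u v) p
      = fderiv ℝ (fun q => (α/2) • ((etaB S q u) • (v + hprB S α q v)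
          - (etaB S q v) • (u + hprB S α q u))) p := by
    apply fderiv_congr_on hs hp
    intro q hq
    rw [tor_eq hs hAK hΓ hq u v, etaB_apply hq, etaB_apply hq, hprB_apply hs hq,
      hprB_apply hs hq]
  rw [hcongr]
  have hcu : DifferentiableAt ℝ (fun q => etaB S q u) p :=
    (etaB_diffAt hs hp).clm_apply (differentiableAt_const u)
  have hcv : DifferentiableAt ℝ (fun q => etaB S q v) p :=
    (etaB_diffAt hs hp).clm_apply (differentiableAt_const v)
  have hfv : DifferentiableAt ℝ (fun q => v + hprB S α q v) p :=
    (differentiableAt_const v).add ((hprB_diffAt hs hp).clm_apply (differentiableAt_const v))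
  have hfu : DifferentiableAt ℝ (fun q => u + hprB S α q u) p :=
    (differentiableAt_const u).add ((hprB_diffAt hs hp).clm_apply (differentiableAt_const u))
  have hsub : DifferentiableAt ℝ (fun q => (etaB S q u) • (v + hprB S α q v)
      - (etaB S q v) • (u + hprB S α q u)) p := (hcu.smul hfv).sub (hcv.smul hfu)
  rw [fderiv_fun_const_smul hsub (α/2), fderiv_fun_sub (f := fun q => _ • _) (g := fun q => _ • _) (hcu.smul hfv) (hcv.smul hfu),
    fderiv_fun_smul hcu hfv, fderiv_fun_smul hcv hfu]
  simp only [ContinuousLinearMap.coe_smul', Pi.smul_apply, ContinuousLinearMap.sub_apply,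
    ContinuousLinearMap.add_apply, ContinuousLinearMap.smul_apply,
    ContinuousLinearMap.smulRight_apply]
  have hDv : fderiv ℝ (fun q => v + hprB S α q v) p x = fderiv ℝ (hprB S α) p x v := by
    rw [fderiv_const_add, fderiv_clm_const (hprB_diffAt hs hp) v x]
  have hDu : fderiv ℝ (fun q => u + hprB S α q u) p x = fderiv ℝ (hprB S α) p x u := by
    rw [fderiv_const_add, fderiv_clm_const (hprB_diffAt hs hp) u x]
  have hDeu : fderiv ℝ (fun q => etaB S q u) p x = S.eta p (canonical α S Γ p x u) := by
    rw [fderiv_clm_const (etaB_diffAt hs hp) u x, ← fderiv_eta_eq hs hp u x,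
      can_eta hs hAK hΓ hp x u]
  have hDev : fderiv ℝ (fun q => etaB S q v) p x = S.eta p (canonical α S Γ p x v) := by
    rw [fderiv_clm_const (etaB_diffAt hs hp) v x, ← fderiv_eta_eq hs hp v x,
      can_eta hs hAK hΓ hp x v]
  rw [hDv, hDu, hDeu, hDev, etaB_apply hp, etaB_apply hp, hprB_apply hs hp, hprB_apply hs hp]
  module

theorem covOp_can_normal (u v : V) :
    covOp (canonical α S Γ) (hpr α S.phi S.xi) p u v
      = fderiv ℝ (hprB S α) p u v + canonical α S Γ p u (hpr α S.phi S.xi p v)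
        - hpr α S.phi S.xi p (canonical α S Γ p u v) := by
  unfold covOp
  rw [fderiv_hpr_eq hs hp v u]

theorem covT2_can (x u v : V) :
    covT2 (canonical α S Γ) (torsion (canonical α S Γ)) p x u v
      = (α/2) • (S.eta p u • covOp (canonical α S Γ) (hpr α S.phi S.xi) p x v
          - S.eta p v • covOp (canonical α S Γ) (hpr α S.phi S.xi) p x u) := by
  unfold covT2
  rw [fderiv_tor hs hAK hΓ hp x u v, tor_eq hs hAK hΓ hp u v,
    tor_eq hs hAK hΓ hp (canonical α S Γ p x u) v,
    tor_eq hs hAK hΓ hp u (canonical α S Γ p x v),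
    can_smul2 hs hAK hΓ hp, can_sub2 hs hAK hΓ hp, can_smul2 hs hAK hΓ hp,
    can_smul2 hs hAK hΓ hp, can_add2 hs hAK hΓ hp, can_add2 hs hAK hΓ hp,
    covOp_can_normal hs hAK hΓ hp x v, covOp_can_normal hs hAK hΓ hp x u]
  module

theorem covOpCan_add2 (u a b : V) :
    covOp (canonical α S Γ) (hpr α S.phi S.xi) p u (a + b)
      = covOp (canonical α S Γ) (hpr α S.phi S.xi) p u a
        + covOp (canonical α S Γ) (hpr α S.phi S.xi) p u b := by
  rw [covOp_can_normal hs hAK hΓ hp, covOp_can_normal hs hAK hΓ hp,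
    covOp_can_normal hs hAK hΓ hp]
  simp only [map_add, hpr_add hs hp, can_add2 hs hAK hΓ hp]
  module

theorem covOpCan_smul2 (u : V) (r : ℝ) (a : V) :
    covOp (canonical α S Γ) (hpr α S.phi S.xi) p u (r • a)
      = r • covOp (canonical α S Γ) (hpr α S.phi S.xi) p u a := by
  rw [covOp_can_normal hs hAK hΓ hp, covOp_can_normal hs hAK hΓ hp]
  simp only [map_smul, hpr_smul hs hp, can_smul2 hs hAK hΓ hp]
  module

theorem can_add1 (a b v : V) :
    canonical α S Γ p (a + b) v = canonical α S Γ p a v + canonical α S Γ p b v := by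
  unfold canonical
  rw [Γ_add1 hΓ hp, hpr_add hs hp]
  have hg : S.g p (a + b + (hpr α S.phi S.xi p a + hpr α S.phi S.xi p b)) v
      = S.g p (a + hpr α S.phi S.xi p a) v + S.g p (b + hpr α S.phi S.xi p b) v := by
    simp only [g_add1 hp]
    ring
  rw [hg]
  module

theorem can_smul1 (r : ℝ) (a v : V) :
    canonical α S Γ p (r • a) v = r • canonical α S Γ p a v := by
  unfold canonical
  rw [Γ_smul1 hΓ hp, hpr_smul hs hp]
  have hg : S.g p (r • a + r • hpr α S.phi S.xi p a) v
      = r * S.g p (a + hpr α S.phi S.xi p a) v := by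
    rw [g_add1 hp, g_smul1 hp, g_smul1 hp, g_add1 hp]
    ring
  rw [hg]
  module

theorem covOpCan_add1 (a b v : V) :
    covOp (canonical α S Γ) (hpr α S.phi S.xi) p (a + b) v
      = covOp (canonical α S Γ) (hpr α S.phi S.xi) p a v
        + covOp (canonical α S Γ) (hpr α S.phi S.xi) p b v := by
  rw [covOp_can_normal hs hAK hΓ hp, covOp_can_normal hs hAK hΓ hp,
    covOp_can_normal hs hAK hΓ hp]
  simp only [map_add, ContinuousLinearMap.add_apply, can_add1 hs hAK hΓ hp, hpr_add hs hp]
  module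

theorem covOpCan_smul1 (r : ℝ) (a v : V) :
    covOp (canonical α S Γ) (hpr α S.phi S.xi) p (r • a) v
      = r • covOp (canonical α S Γ) (hpr α S.phi S.xi) p a v := by
  rw [covOp_can_normal hs hAK hΓ hp, covOp_can_normal hs hAK hΓ hp]
  simp only [map_smul, ContinuousLinearMap.smul_apply, can_smul1 hs hAK hΓ hp, hpr_smul hs hp]
  module

end Tor

/-- for a CR-integrable almost α-Kenmotsu manifold, the following
are equivalent: `∇̃T̃ = 0`; `∇̃h' = 0`; `h'` is η-parallel and `∇_ξ h' = 0`. -/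
theorem stmt_12 (n : ℕ) (s : Set (E (2*n+1))) (hs : IsOpen s) (S : ACM s) (α : ℝ)
    (hAK : IsAK s S α) (hCR : CRIntegrableOn s S)
    (Γ : E (2*n+1) → E (2*n+1) → E (2*n+1) → E (2*n+1))
    (hΓ : IsLeviCivitaOn s S.g Γ) :
    (ParallelTorsion s (canonical α S Γ) ↔
      (∀ p ∈ s, ∀ u v : E (2*n+1),
        covOp (canonical α S Γ) (hpr α S.phi S.xi) p u v = 0)) ∧
    ((∀ p ∈ s, ∀ u v : E (2*n+1),
        covOp (canonical α S Γ) (hpr α S.phi S.xi) p u v = 0) ↔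
      (EtaParallelH s S α Γ ∧ XiParallelH s S α Γ)) := by
  have hα : α ≠ 0 := ne_of_gt hAK.pos
  have hα2 : (α/2 : ℝ) ≠ 0 := div_ne_zero hα two_ne_zero
  constructor
  · constructor
    · intro hPT p hp u v
      have hT := covT2_can hs hAK hΓ hp u (S.xi p) v
      rw [hPT p hp u (S.xi p) v, covOp_can_xi2 hs hAK hΓ hp u, S.eta_xi p hp, one_smul,
        smul_zero, sub_zero] at hT
      rcases smul_eq_zero.mp hT.symm with h | h
      · exact absurd h hα2
      · exact h
    · intro hOp p hp x u v
      rw [covT2_can hs hAK hΓ hp x u v, hOp p hp x v, hOp p hp x u, smul_zero, smul_zero,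
        sub_zero, smul_zero]
  · constructor
    · intro hOp
      constructor
      · intro p hp u v w hu hv hw
        have hce := covOp_can_eq hs hAK hΓ hp u v
        rw [hOp p hp u v, hv, mul_zero, zero_smul, add_zero] at hce
        have hX : covOp Γ (hpr α S.phi S.xi) p u v
            = -((α * S.g p (u + hpr α S.phi S.xi p u) (hpr α S.phi S.xi p v)) • S.xi p) :=
          eq_neg_of_add_eq_zero_left hce.symm
        rw [hX, g_neg1 hp, g_smul1 hp]
        have hxi : S.g p (S.xi p) w = 0 := by rw [gsym hp, ← eta_eq_g hp, hw]
        rw [hxi, mul_zero, neg_zero]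
      · intro p hp v
        have hce := covOp_can_eq hs hAK hΓ hp (S.xi p) v
        rw [hOp p hp (S.xi p) v] at hce
        have hg0 : S.g p (S.xi p + hpr α S.phi S.xi p (S.xi p)) (hpr α S.phi S.xi p v) = 0 := by
          rw [hpr_xi hs hAK hΓ hp, add_zero, gsym hp, ← eta_eq_g hp, eta_hpr hs hAK hΓ hp]
        rw [hg0, mul_zero, zero_smul, add_zero, hpr_xi hs hAK hΓ hp, hpr_zero hs hp,
          add_zero, smul_zero, add_zero] at hce
        exact hce.symm
    · rintro ⟨hE, hX⟩ p hp u v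
      have hcanxi : ∀ w : E (2*n+1),
          covOp (canonical α S Γ) (hpr α S.phi S.xi) p (S.xi p) w = 0 := by
        intro w
        rw [covOp_can_eq hs hAK hΓ hp, hX p hp w]
        have hg0 : S.g p (S.xi p + hpr α S.phi S.xi p (S.xi p)) (hpr α S.phi S.xi p w) = 0 := by
          rw [hpr_xi hs hAK hΓ hp, add_zero, gsym hp, ← eta_eq_g hp, eta_hpr hs hAK hΓ hp]
        rw [hg0, mul_zero, zero_smul, add_zero, zero_add, hpr_xi hs hAK hΓ hp,
          hpr_zero hs hp, add_zero, smul_zero]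
      have hmain : ∀ u0 v0 : E (2*n+1), S.eta p u0 = 0 → S.eta p v0 = 0 →
          covOp (canonical α S Γ) (hpr α S.phi S.xi) p u0 v0 = 0 := by
        intro u0 v0 hu0 hv0
        have hce := covOp_can_eq hs hAK hΓ hp u0 v0
        rw [hv0, mul_zero, zero_smul, add_zero] at hce
        have hXw : ∀ w : E (2*n+1),
            S.g p (covOp (canonical α S Γ) (hpr α S.phi S.xi) p u0 v0) w = 0 := by
          intro w
          have hw0 : S.eta p (w - S.eta p w • S.xi p) = 0 := by
            rw [eta_sub hp, eta_smul hp, S.eta_xi p hp, mul_one, sub_self]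
          have hsplit : w = (w - S.eta p w • S.xi p) + S.eta p w • S.xi p := by abel
          have hEterm : S.g p (covOp Γ (hpr α S.phi S.xi) p u0 v0)
              (w - S.eta p w • S.xi p) = 0 := hE p hp u0 v0 _ hu0 hv0 hw0
          have hXiterm : S.g p (covOp Γ (hpr α S.phi S.xi) p u0 v0) (S.xi p)
              = - (α * S.g p (u0 + hpr α S.phi S.xi p u0) (hpr α S.phi S.xi p v0)) := by
            rw [g_covOp_xi hs hAK hΓ hp u0 v0, star hs hAK hΓ hp u0, hu0, zero_smul,
              sub_zero, g_smul2 hp, gsym hp]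
          have hgxiw0 : S.g p (S.xi p) (w - S.eta p w • S.xi p) = 0 := by
            rw [gsym hp, ← eta_eq_g hp, hw0]
          rw [hce]
          conv_lhs => rw [hsplit]
          simp only [g_add1 hp, g_add2 hp, g_smul1 hp, g_smul2 hp]
          rw [hEterm, hXiterm, hgxiw0, g_xi_xi hp]
          simp only [g_add1 hp]
          ring
        exact nondeg hp (fun z => by rw [gsym hp]; exact hXw z)
      have hu0η : S.eta p (u - S.eta p u • S.xi p) = 0 := by
        rw [eta_sub hp, eta_smul hp, S.eta_xi p hp, mul_one, sub_self]
      have hv0η : S.eta p (v - S.eta p v • S.xi p) = 0 := by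
        rw [eta_sub hp, eta_smul hp, S.eta_xi p hp, mul_one, sub_self]
      have hsu : u = (u - S.eta p u • S.xi p) + S.eta p u • S.xi p := by abel
      have hsv : v = (v - S.eta p v • S.xi p) + S.eta p v • S.xi p := by abel
      conv_lhs => rw [hsu, hsv]
      simp only [covOpCan_add1 hs hAK hΓ hp, covOpCan_smul1 hs hAK hΓ hp,
        covOpCan_add2 hs hAK hΓ hp, covOpCan_smul2 hs hAK hΓ hp]
      rw [hmain _ _ hu0η hv0η, covOp_can_xi2 hs hAK hΓ hp, covOp_can_xi2 hs hAK hΓ hp]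
      simp [hcanxi]

end AKG
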